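/- Let w = pTSq and w' = pSTq be words over {S,T}. Then (#STST(w) + #TSTS(w)) − (#STST(w') + #TSTS(w')) = #TS(p) + #TS(q) + #S(p)·#T(q) − #ST(p) − #ST(q) − #T(p)·#S(q). -/

import Mathlib

inductive Letter | S | T
deriving DecidableEq, Repr

open Letter

/-- Number of occurrences of `u` as a (not necessarily contiguous) subsequence of `w`. -/
def cnt (u w : List Letter) : ℕ := w.sublists.count u

lemma count_inst (u : List Letter) (L : List (List Letter)) :
    @List.count _ List.instBEq u L = @List.count _ instBEqOfDecidableEq u L := by
  induction L with
  | nil => rfl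
  | cons a L ih =>
    rw [@List.count_cons _ List.instBEq, @List.count_cons _ instBEqOfDecidableEq, ih]
    by_cases h : a = u <;> simp [h]

lemma cnt_eq (u w : List Letter) : cnt u w = w.sublists'.count u := by
  unfold cnt
  rw [count_inst, count_inst]
  simpa only [count_inst] using (List.sublists_perm_sublists' w).count_eq u

lemma cnt_nil_left (w : List Letter) : cnt [] w = 1 := by
  induction w with
  | nil => rfl
  | cons x w ih =>
    rw [cnt_eq] at *
    rw [List.sublists'_cons, List.count_append, ih]
    rw [List.count_eq_zero.mpr, Nat.add_zero]
    intro hm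
    obtain ⟨s, _, hc⟩ := List.mem_map.mp hm
    exact List.cons_ne_nil _ _ hc

lemma cnt_cons (y x : Letter) (u w : List Letter) :
    cnt (y :: u) (x :: w) = cnt (y :: u) w + if y = x then cnt u w else 0 := by
  simp only [cnt_eq, List.sublists'_cons, List.count_append]
  congr 1
  by_cases h : y = x
  · subst h
    rw [if_pos rfl]
    have h := List.count_map_of_injective (α := List Letter) (β := List Letter)
      w.sublists' (List.cons y) List.cons_injective u
    rw [count_inst, count_inst]
    simpa only [count_inst] using h
  · rw [if_neg h, List.count_eq_zero]
    intro hm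
    obtain ⟨s, _, hc⟩ := List.mem_map.mp hm
    exact h ((List.cons_eq_cons.mp hc.symm).1)

lemma cnt_nil_right (u : List Letter) : cnt u [] = if u = [] then 1 else 0 := by
  cases u with
  | nil => rfl
  | cons y u => simp [cnt]

lemma cnt_append (u a b : List Letter) :
    cnt u (a ++ b) = ∑ i ∈ Finset.range (u.length + 1),
      cnt (u.take i) a * cnt (u.drop i) b := by
  induction a generalizing u with
  | nil =>
    rw [List.nil_append, Finset.sum_eq_single 0]
    · simp [cnt_nil_left]
    · intro i _ hi
      rw [cnt_nil_right, if_neg, zero_mul]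
      cases u with
      | nil => simp at *; omega
      | cons y u => simp [List.take_eq_nil_iff]; omega
    · simp
  | cons x a ih =>
    cases u with
    | nil => simp [cnt_nil_left]
    | cons y u =>
      rw [List.cons_append, cnt_cons, ih]
      rw [Finset.sum_range_succ' (fun i => cnt ((y :: u).take i) (x :: a) * cnt ((y :: u).drop i) b)]
      simp only [List.take_zero, List.drop_zero, cnt_nil_left, one_mul,
        List.take_succ_cons, List.drop_succ_cons, cnt_cons]
      rw [Finset.sum_range_succ' (fun i => cnt ((y :: u).take i) a * cnt ((y :: u).drop i) b)]
      simp only [List.take_zero, List.drop_zero, cnt_nil_left, one_mul,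
        List.take_succ_cons, List.drop_succ_cons]
      by_cases h : y = x
      · simp only [if_pos h, add_mul, Finset.sum_add_distrib, ih]
        simp only [List.length_cons, Nat.add_comm 1 u.length]
        ring
      · simp only [if_neg h, add_zero, zero_mul, add_zero]

lemma cnt_singleton (x : Letter) (w : List Letter) : cnt [x] w = w.count x := by
  induction w with
  | nil => rfl
  | cons y w ih =>
    rw [cnt_cons, ih, List.count_cons, cnt_nil_left]
    cases x <;> cases y <;> simp_all

set_option maxRecDepth 100000 in
theorem stmt3 (p q : List Letter) :
    ((cnt [S,T,S,T] (p ++ [T,S] ++ q) + cnt [T,S,T,S] (p ++ [T,S] ++ q) : ℤ)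
        - (cnt [S,T,S,T] (p ++ [S,T] ++ q) + cnt [T,S,T,S] (p ++ [S,T] ++ q) : ℤ))
      = (cnt [T,S] p : ℤ) + cnt [T,S] q + p.count S * q.count T
        - cnt [S,T] p - cnt [S,T] q - p.count T * q.count S := by
  simp only [List.append_assoc, cnt_append, Finset.sum_range_succ, Finset.sum_range_zero,
    List.length_cons, List.length_nil, List.take_succ_cons, List.take_zero, List.drop_succ_cons,
    List.drop_zero, cnt_cons, cnt_nil_left, cnt_nil_right, cnt_singleton, reduceIte,
    List.take_nil, List.drop_nil]
  push_cast
  ring
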